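/- Let E ⊆ ℝ^V (V finite, partitioned into {S_j}_{j∈J}) be a subspace such that Σ_j Σ_{v∈S_j}|f(v) − f_j| ≤ γ Σ_v|f(v)| for all f ∈ E, where f_j = ⟨ζ_j, f⟩ with ζ_j ≥ 0 nonnegative sampling functions and 0 < γ < 1/2. Let the sampling map Q : E → ℝ^J, Qf = (f_j), be injective, and define Θ on R(Q) by Θ((f_j)) = Σ_v f(v) − ((1−2γ)/(1−γ)) Σ_j f_j |S_j|, where f = Q⁻¹((f_j)). Then for every (f_j) ∈ R(Q) of the form (f_j) = (g_j) + (h_j) with Σ_j |g_j||S_j| ≤ 1 and h_j ≥ 0 for all j, one has Θ((f_j)) ≥ −2/(1−γ). -/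

import Mathlib

open Finset

/-- Lemma 6.2: lower bound for the functional `Θ` on `F ∩ (U + C)`. With nonnegative sampling
functions `ζ_j`, injective sampling map `Q` on the subspace `E`, and the `ℓ¹` approximation
inequality with `0 < γ < 1/2`: if the sample vector of `f ∈ E` decomposes as `(g_j) + (h_j)`
with `Σ_j |g_j||S_j| ≤ 1` and `h_j ≥ 0`, then
`Σ_v f(v) − ((1−2γ)/(1−γ)) Σ_j f_j |S_j| ≥ −2/(1−γ)`. -/
theorem stmt14 {V J : Type*} [Fintype V] [Fintype J]
    (S : J → Finset V)
    (hdisj : ∀ i j, i ≠ j → Disjoint (S i) (S j))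
    (hcover : ∀ v : V, ∃ j, v ∈ S j)
    (ζ : J → V → ℝ) (hζnn : ∀ j v, 0 ≤ ζ j v) (hsupp : ∀ j, ∀ v ∉ S j, ζ j v = 0)
    (γ : ℝ) (hγ0 : 0 < γ) (hγ : γ < 1 / 2)
    (E : Submodule ℝ (V → ℝ))
    (happrox : ∀ f ∈ E, ∑ j, ∑ v ∈ S j, |f v - ∑ u, ζ j u * f u| ≤ γ * ∑ v, |f v|)
    (hinj : ∀ f ∈ E, ∀ g ∈ E,
      (∀ j, (∑ u, ζ j u * f u) = ∑ u, ζ j u * g u) → f = g)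
    (f : V → ℝ) (hf : f ∈ E)
    (g h : J → ℝ)
    (hdecomp : ∀ j, (∑ u, ζ j u * f u) = g j + h j)
    (hg : ∑ j, |g j| * ((S j).card : ℝ) ≤ 1)
    (hh : ∀ j, 0 ≤ h j) :
    -(2 / (1 - γ)) ≤
      ∑ v, f v - ((1 - 2 * γ) / (1 - γ)) * ∑ j, (∑ u, ζ j u * f u) * ((S j).card : ℝ) := by

  classical
  set fj : J → ℝ := fun j => ∑ u, ζ j u * f u with hfjdef
  have h1γ : (0:ℝ) < 1 - γ := by linarith
  have hbi : (Finset.univ : Finset J).biUnion S = (Finset.univ : Finset V) := by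
    ext v; simpa using hcover v
  have hpd : (↑(Finset.univ : Finset J) : Set J).PairwiseDisjoint S :=
    fun i _ j _ hij => hdisj i j hij
  have hpart : ∀ F : V → ℝ, ∑ v, F v = ∑ j, ∑ v ∈ S j, F v := by
    intro F; rw [← Finset.sum_biUnion hpd, hbi]
  set A : ℝ := ∑ v, f v with hA
  set B : ℝ := ∑ j, fj j * ((S j).card : ℝ) with hB
  set N : ℝ := ∑ j, |fj j| * ((S j).card : ℝ) with hN
  set T : ℝ := ∑ v, |f v| with hT
  have hTnn : 0 ≤ T := Finset.sum_nonneg fun v _ => abs_nonneg _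
  have key1 : |A - B| ≤ γ * T := by
    have hAB : A - B = ∑ j, ∑ v ∈ S j, (f v - fj j) := by
      rw [hA, hpart f, hB, ← Finset.sum_sub_distrib]
      refine Finset.sum_congr rfl fun j _ => ?_
      rw [Finset.sum_sub_distrib, Finset.sum_const, nsmul_eq_mul, mul_comm]
    rw [hAB]
    calc |∑ j, ∑ v ∈ S j, (f v - fj j)| ≤ ∑ j, ∑ v ∈ S j, |f v - fj j| := by
          refine (Finset.abs_sum_le_sum_abs _ _).trans ?_
          exact Finset.sum_le_sum fun j _ => Finset.abs_sum_le_sum_abs _ _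
      _ ≤ γ * T := happrox f hf
  have key2 : (1 - γ) * T ≤ N := by
    have h2 : T ≤ γ * T + N := by
      have happ := happrox f hf
      rw [← hT] at happ
      calc T = ∑ j, ∑ v ∈ S j, |f v| := hpart fun v => |f v|
        _ ≤ ∑ j, ((∑ v ∈ S j, |f v - fj j|) + |fj j| * ((S j).card : ℝ)) := by
            refine Finset.sum_le_sum fun j _ => ?_
            have : ∑ v ∈ S j, |f v| ≤ ∑ v ∈ S j, (|f v - fj j| + |fj j|) := by
              refine Finset.sum_le_sum fun v _ => ?_
              calc |f v| = |f v - fj j + fj j| := by ring_nf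
                _ ≤ |f v - fj j| + |fj j| := abs_add_le _ _
            simpa [Finset.sum_add_distrib, Finset.sum_const, nsmul_eq_mul, mul_comm] using this
        _ = (∑ j, ∑ v ∈ S j, |f v - fj j|) + N := by rw [Finset.sum_add_distrib, hN]
        _ ≤ γ * T + N := by linarith
    linarith
  have key3 : N ≤ B + 2 := by
    have hterm : ∀ j, |fj j| * ((S j).card : ℝ)
        ≤ fj j * ((S j).card : ℝ) + 2 * (|g j| * ((S j).card : ℝ)) := by
      intro j
      have hd : fj j = g j + h j := hdecomp j
      have hge : -|g j| ≤ fj j := by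
        rw [hd]; have := hh j; have := neg_abs_le (g j); linarith
      have hcard : (0:ℝ) ≤ ((S j).card : ℝ) := Nat.cast_nonneg _
      have habs : |fj j| ≤ fj j + 2 * |g j| := by
        rcases abs_cases (fj j) with ⟨h1, _⟩ | ⟨h1, _⟩ <;> nlinarith [abs_nonneg (g j)]
      nlinarith
    have : N ≤ ∑ j, (fj j * ((S j).card : ℝ) + 2 * (|g j| * ((S j).card : ℝ))) :=
      Finset.sum_le_sum fun j _ => hterm j
    rw [Finset.sum_add_distrib, ← Finset.mul_sum] at this
    have := hg
    rw [hB]; linarith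
  have hABlow : -(γ * T) ≤ A - B := (abs_le.mp key1).1
  have hfinal : -2 ≤ (1 - γ) * A - (1 - 2 * γ) * B := by nlinarith
  have hrw : A - ((1 - 2 * γ) / (1 - γ)) * B = ((1 - γ) * A - (1 - 2 * γ) * B) / (1 - γ) := by
    field_simp
  rw [hrw, show -(2 / (1 - γ)) = (-2) / (1 - γ) by ring]
  exact div_le_div_of_nonneg_right hfinal h1γ.le |>.trans_eq rfl
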